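/- (Lemma 2) For any nonempty bounded interval I = [a,b'] ⊂ ℝ, any t ≥ 0, and any subset U of C_b, one has α((T(t)U)_I) ≤ e^{−t} α(U_I), where for a set V ⊆ C_b the restriction V_I = {φ|_I : φ ∈ V} is regarded as a subset of the Banach space C(I,ℝ) with the supremum norm, and α is the Kuratowski measure of noncompactness in C(I,ℝ). -/

import Mathlib

open MeasureTheory Real Set
open scoped ENNReal

/-- Iterated convolutions: `a_0(φ) = φ`, `a_k(φ)(x) = ∫ J(x−y) a_{k−1}(φ)(y) dy`. -/
noncomputable def ak (J : ℝ → ℝ) : ℕ → (ℝ → ℝ) → ℝ → ℝ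
  | 0, φ => φ
  | k + 1, φ => fun x => ∫ y, J (x - y) * ak J k φ y

/-- The linear solution map `T(t)φ(x) = e^{−t} Σ_{k=0}^∞ (t^k/k!) a_k(φ)(x)`. -/
noncomputable def Tmap (J : ℝ → ℝ) (t : ℝ) (φ : ℝ → ℝ) (x : ℝ) : ℝ :=
  Real.exp (-t) * ∑' k : ℕ, t ^ k / (Nat.factorial k) * ak J k φ x

/-- The Kuratowski measure of noncompactness: the infimum (in `ℝ≥0∞`, so `∞` if no
such cover exists) of all `ε` such that `A` admits a finite cover by sets of
diameter at most `ε`. -/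
noncomputable def kurat {X : Type*} [PseudoEMetricSpace X] (A : Set X) : ℝ≥0∞ :=
  sInf {ε : ℝ≥0∞ | ∃ (n : ℕ) (C : Fin n → Set X), A ⊆ ⋃ i, C i ∧
    ∀ i, EMetric.diam (C i) ≤ ε}

/-- The restrictions to `[a,b']` of the members of a set `V` of functions on `ℝ`,
regarded as a subset of the Banach space `C([a,b'], ℝ)` with the sup norm. -/
def restrictSet (a b' : ℝ) (V : Set (ℝ → ℝ)) : Set C(Set.Icc a b', ℝ) :=
  {ψ | ∃ φ ∈ V, ∀ x : Set.Icc a b', ψ x = φ ↑x}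


open Filter Topology

section KuratLemmas

variable {X : Type*} [PseudoEMetricSpace X]

lemma kurat_le_of_cover {A : Set X} {ε : ℝ≥0∞} (n : ℕ) (C : Fin n → Set X)
    (hc : A ⊆ ⋃ i, C i) (hd : ∀ i, EMetric.diam (C i) ≤ ε) : kurat A ≤ ε :=
  sInf_le ⟨n, C, hc, hd⟩

lemma exists_cover_of_kurat_lt {A : Set X} {x : ℝ≥0∞} (h : kurat A < x) :
    ∃ ε < x, ∃ n, ∃ C : Fin n → Set X, A ⊆ ⋃ i, C i ∧ ∀ i, EMetric.diam (C i) ≤ ε := by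
  obtain ⟨ε, hmem, hlt⟩ := sInf_lt_iff.1 h
  exact ⟨ε, hlt, hmem⟩

lemma kurat_eq_zero_of_totallyBounded {A : Set X} (h : TotallyBounded A) : kurat A = 0 := by
  refine le_antisymm ?_ zero_le
  refine ENNReal.le_of_forall_pos_le_add fun ε hε _ => ?_
  rw [zero_add]
  have hε2 : 0 < (ε : ℝ≥0∞) / 2 :=
    ENNReal.div_pos (by exact_mod_cast hε.ne') ENNReal.ofNat_ne_top
  rcases EMetric.totallyBounded_iff.1 h ((ε : ℝ≥0∞) / 2) hε2 with ⟨s, hsfin, hsc⟩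
  rcases hsfin.fin_embedding with ⟨n, f, hf⟩
  refine kurat_le_of_cover n (fun i => EMetric.ball (f i) ((ε : ℝ≥0∞) / 2)) ?_ ?_
  · intro x hx
    rcases mem_iUnion₂.1 (hsc hx) with ⟨y, hy, hxy⟩
    rw [← hf] at hy
    rcases hy with ⟨i, rfl⟩
    exact mem_iUnion.2 ⟨i, hxy⟩
  · intro i
    calc EMetric.diam _ ≤ 2 * ((ε : ℝ≥0∞) / 2) := EMetric.diam_ball
    _ = ε := ENNReal.mul_div_cancel (two_ne_zero) ENNReal.ofNat_ne_top

end KuratLemmas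

lemma kurat_le_smul_add {X : Type*} [NormedAddCommGroup X] [NormedSpace ℝ X]
    {A B S : Set X} {c : ℝ} (hc : 0 < c)
    (hd : ∀ x ∈ A, ∃ u ∈ B, ∃ v ∈ S, x = c • u + v)
    (hS : kurat S = 0) :
    kurat A ≤ ENNReal.ofReal c * kurat B := by
  classical
  set cE := ENNReal.ofReal c with hcE
  have hcE0 : cE ≠ 0 := by simp [hcE, hc, ENNReal.ofReal_eq_zero, not_le]
  have hcEtop : cE ≠ ⊤ := ENNReal.ofReal_ne_top
  rcases eq_or_ne (kurat B) ⊤ with hB | hB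
  · rw [hB, ENNReal.mul_top hcE0]; exact le_top
  refine ENNReal.le_of_forall_pos_le_add fun ε hε hlt => ?_
  have hε2 : (0 : ℝ≥0∞) < (ε : ℝ≥0∞) / 2 :=
    ENNReal.div_pos (by exact_mod_cast hε.ne') ENNReal.ofNat_ne_top
  have hδ0 : ((ε : ℝ≥0∞) / 2 / cE) ≠ 0 := by
    simp only [ne_eq, ENNReal.div_eq_zero_iff, not_or]
    exact ⟨⟨by exact_mod_cast hε.ne', ENNReal.ofNat_ne_top⟩, hcEtop⟩
  have hβδ : kurat B < kurat B + (ε : ℝ≥0∞) / 2 / cE := ENNReal.lt_add_right hB hδ0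
  obtain ⟨εB, hεBlt, n, C, hBC, hCd⟩ := exists_cover_of_kurat_lt hβδ
  obtain ⟨εS, hεSlt, m, D, hSD, hDd⟩ := exists_cover_of_kurat_lt (hS ▸ hε2)
  let e := finProdFinEquiv (m := n) (n := m)
  let P : Fin n × Fin m → Set X := fun p =>
    {x | ∃ u ∈ B ∩ C p.1, ∃ v ∈ S ∩ D p.2, x = c • u + v}
  have cover : A ⊆ ⋃ i : Fin (n * m), P (e.symm i) := by
    intro x hx
    obtain ⟨u, hu, v, hv, rfl⟩ := hd x hx
    obtain ⟨i, hui⟩ := mem_iUnion.1 (hBC hu)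
    obtain ⟨j, hvj⟩ := mem_iUnion.1 (hSD hv)
    refine mem_iUnion.2 ⟨e (i, j), ?_⟩
    simp only [Equiv.symm_apply_apply]
    exact ⟨u, ⟨hu, hui⟩, v, ⟨hv, hvj⟩, rfl⟩
  have hdiam : ∀ i : Fin (n * m), EMetric.diam (P (e.symm i)) ≤ cE * εB + εS := by
    intro i
    apply EMetric.diam_le
    rintro x ⟨u, hu, v, hv, rfl⟩ y ⟨u', hu', v', hv', rfl⟩
    calc edist (c • u + v) (c • u' + v')
        ≤ edist (c • u + v) (c • u' + v) + edist (c • u' + v) (c • u' + v') :=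
          edist_triangle _ _ _
      _ = edist (c • u) (c • u') + edist v v' := by rw [edist_add_right, edist_add_left]
      _ ≤ cE * εB + εS := by
          refine add_le_add ?_ ?_
          · rw [edist_smul₀, ENNReal.smul_def, smul_eq_mul, ← enorm_eq_nnnorm, Real.enorm_eq_ofReal hc.le]
            exact mul_le_mul_right ((EMetric.edist_le_diam_of_mem hu.2 hu'.2).trans (hCd _)) _
          · exact (EMetric.edist_le_diam_of_mem hv.2 hv'.2).trans (hDd _)
  calc kurat A ≤ cE * εB + εS := kurat_le_of_cover _ _ cover hdiam
    _ ≤ cE * (kurat B + (ε : ℝ≥0∞) / 2 / cE) + (ε : ℝ≥0∞) / 2 :=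
        add_le_add (mul_le_mul_right hεBlt.le _) hεSlt.le
    _ = cE * kurat B + ε := by
        rw [mul_add, ENNReal.mul_div_cancel hcE0 hcEtop, add_assoc, ENNReal.add_halves]

/-- The `L¹` modulus of continuity of translations of `J`. -/
noncomputable def omegaJ (J : ℝ → ℝ) (h : ℝ) : ℝ := ∫ u, |J (u - h) - J u|

lemma omegaJ_nonneg (J : ℝ → ℝ) (h : ℝ) : 0 ≤ omegaJ J h :=
  integral_nonneg fun _ => abs_nonneg _

lemma tendsto_omegaJ {J : ℝ → ℝ} (hJi : Integrable J) :
    Tendsto (omegaJ J) (𝓝 0) (𝓝 0) := by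
  set JL : Lp ℝ 1 (volume : Measure ℝ) := (memLp_one_iff_integrable.2 hJi).toLp J with hJL
  set G : C(ℝ, C(ℝ, ℝ)) :=
    ContinuousMap.curry ⟨fun p : ℝ × ℝ => p.2 - p.1, by fun_prop⟩ with hG
  have hGm : ∀ h : ℝ, MeasurePreserving (G h) volume volume := fun h =>
    measurePreserving_sub_right volume h
  set F : ℝ → Lp ℝ 1 (volume : Measure ℝ) :=
    fun h => Lp.compMeasurePreserving (G h) (hGm h) JL with hF
  have hFc : Continuous F :=
    continuous_const.compMeasurePreservingLp G.continuous hGm ENNReal.one_ne_top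
  have hcoe : ∀ h : ℝ, (F h : ℝ → ℝ) =ᵐ[volume] fun u => J (u - h) := by
    intro h
    refine (Lp.coeFn_compMeasurePreserving JL (hGm h)).trans ?_
    exact (hGm h).quasiMeasurePreserving.ae_eq ((memLp_one_iff_integrable.2 hJi).coeFn_toLp)
  have key : ∀ h, omegaJ J h = ‖F h - F 0‖ := by
    intro h
    rw [MeasureTheory.L1.norm_eq_integral_norm]
    refine (integral_congr_ae ?_).symm
    filter_upwards [Lp.coeFn_sub (F h) (F 0), hcoe h, hcoe 0] with u h1 h2 h3
    simp only [h1, Pi.sub_apply, h2, h3, Real.norm_eq_abs, sub_zero]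
  have h2 : Tendsto (fun h => ‖F h - F 0‖) (𝓝 0) (𝓝 0) := by
    have hc2 : Continuous fun h => ‖F h - F 0‖ := (hFc.sub continuous_const).norm
    simpa using hc2.tendsto 0
  exact (funext key : omegaJ J = _) ▸ h2

section a1

variable {J : ℝ → ℝ} (hJ0 : ∀ y, 0 ≤ J y) (hJi : Integrable J)
  (hJ1 : ∫ y, J y = 1) {b : ℝ}

include hJi in
lemma Jsub_integrable (x : ℝ) : Integrable (fun y => J (x - y)) := by
  have := (Measure.measurePreserving_sub_left (volume : Measure ℝ) x).integrable_comp
    hJi.aestronglyMeasurable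
  exact this.2 hJi

include hJi in
lemma a1_integrable {ψ : ℝ → ℝ} (hψm : AEStronglyMeasurable ψ volume)
    (hψb : ∀ y, |ψ y| ≤ b) (x : ℝ) :
    Integrable (fun y => J (x - y) * ψ y) := by
  have h := (Jsub_integrable hJi (x := x)).bdd_mul hψm (Eventually.of_forall fun y => by simpa using hψb y)
  simpa [mul_comm] using h

include hJ0 hJi hJ1 in
lemma a1_mem {ψ : ℝ → ℝ} (hψm : AEStronglyMeasurable ψ volume)
    (hψ : ∀ y, ψ y ∈ Icc (0:ℝ) b) (x : ℝ) :
    (∫ y, J (x - y) * ψ y) ∈ Icc (0:ℝ) b := by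
  have hb0 : 0 ≤ b := le_trans (hψ 0).1 (hψ 0).2
  have hψb : ∀ y, |ψ y| ≤ b := fun y => abs_le.2 ⟨neg_nonpos.2 hb0 |>.trans (hψ y).1, (hψ y).2⟩
  have hint := a1_integrable hJi hψm hψb x
  constructor
  · exact integral_nonneg fun y => mul_nonneg (hJ0 _) (hψ y).1
  · have h1 : (∫ y, J (x - y) * ψ y) ≤ ∫ y, J (x - y) * b := by
      refine integral_mono hint ((Jsub_integrable hJi (x := x)).mul_const b) fun y => ?_
      exact mul_le_mul_of_nonneg_left (hψ y).2 (hJ0 _)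
    have h2 : (∫ y, J (x - y) * b) = b := by
      rw [integral_mul_const, integral_sub_left_eq_self J volume x, hJ1, one_mul]
    linarith
end a1

section a1mod
variable {J : ℝ → ℝ} (hJi : Integrable J) {b : ℝ}

include hJi in
lemma a1_mod {ψ : ℝ → ℝ} (hψm : AEStronglyMeasurable ψ volume)
    (hψ : ∀ y, ψ y ∈ Icc (0:ℝ) b) (x x' : ℝ) :
    |(∫ y, J (x - y) * ψ y) - ∫ y, J (x' - y) * ψ y| ≤ b * omegaJ J (x' - x) := by
  have hb0 : 0 ≤ b := le_trans (hψ 0).1 (hψ 0).2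
  have hψb : ∀ y, |ψ y| ≤ b := fun y => abs_le.2
    ⟨(neg_nonpos.2 hb0).trans (hψ y).1, (hψ y).2⟩
  have i1 := a1_integrable hJi hψm hψb x
  have i2 := a1_integrable hJi hψm hψb x'
  rw [← integral_sub i1 i2]
  have key : (∫ y, |J (x - y) - J (x' - y)|) = omegaJ J (x' - x) := by
    have := integral_sub_left_eq_self (fun u => |J (u - (x' - x)) - J u|) volume x'
    rw [omegaJ, ← this]
    congr 1
    funext y
    ring_nf
  have habs : ∀ y, ‖J (x - y) * ψ y - J (x' - y) * ψ y‖ ≤ |J (x - y) - J (x' - y)| * b := by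
    intro y
    rw [← sub_mul, Real.norm_eq_abs, abs_mul]
    exact mul_le_mul_of_nonneg_left (hψb y) (abs_nonneg _)
  calc |∫ y, (J (x - y) * ψ y - J (x' - y) * ψ y)|
      ≤ ∫ y, ‖J (x - y) * ψ y - J (x' - y) * ψ y‖ := by
        simpa [Real.norm_eq_abs] using
          norm_integral_le_integral_norm (fun y => J (x - y) * ψ y - J (x' - y) * ψ y)
    _ ≤ ∫ y, |J (x - y) - J (x' - y)| * b := by
        refine integral_mono_of_nonneg (Eventually.of_forall fun y => norm_nonneg _)
          ((((Jsub_integrable hJi (x := x)).sub (Jsub_integrable hJi (x := x'))).abs.mul_const b))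
          (Eventually.of_forall habs)
    _ = b * omegaJ J (x' - x) := by
        rw [integral_mul_const, key, mul_comm]

end a1mod

lemma cont_of_mod {w : ℝ → ℝ} (hw : Tendsto w (𝓝 0) (𝓝 0)) {f : ℝ → ℝ}
    (hm : ∀ x x', |f x - f x'| ≤ w (x' - x)) : Continuous f := by
  rw [continuous_iff_continuousAt]
  intro x₀
  rw [ContinuousAt, tendsto_iff_dist_tendsto_zero]
  refine squeeze_zero (g := fun x : ℝ => w (x₀ - x)) (fun x => dist_nonneg)
    (fun x => (Real.dist_eq _ _).trans_le (hm x x₀)) ?_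
  have h1 : Tendsto (fun x : ℝ => x₀ - x) (𝓝 x₀) (𝓝 (x₀ - x₀)) :=
    tendsto_const_nhds.sub tendsto_id
  rw [sub_self] at h1
  exact hw.comp h1

lemma cont_of_mod_subtype {w : ℝ → ℝ} (hw : Tendsto w (𝓝 0) (𝓝 0)) {s : Set ℝ} {g : s → ℝ}
    (hm : ∀ x x' : s, |g x - g x'| ≤ w ((x' : ℝ) - x)) : Continuous g := by
  rw [continuous_iff_continuousAt]
  intro x₀
  rw [ContinuousAt, tendsto_iff_dist_tendsto_zero]
  refine squeeze_zero (g := fun x : s => w ((x₀ : ℝ) - x)) (fun x => dist_nonneg)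
    (fun x => (Real.dist_eq _ _).trans_le (hm x x₀)) ?_
  have h1 : Tendsto (fun x : s => (x₀ : ℝ) - x) (𝓝 x₀) (𝓝 ((x₀ : ℝ) - (x₀ : ℝ))) :=
    tendsto_const_nhds.sub (continuous_subtype_val.tendsto x₀)
  rw [sub_self] at h1
  exact hw.comp h1

section akprops
variable {J : ℝ → ℝ} (hJ0 : ∀ y, 0 ≤ J y) (hJi : Integrable J) (hJ1 : ∫ y, J y = 1) {b : ℝ}

include hJ0 hJi hJ1 in
lemma ak_props {φ : ℝ → ℝ} (hφc : Continuous φ) (hφ : ∀ x, φ x ∈ Icc (0:ℝ) b) (k : ℕ) :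
    Continuous (ak J k φ) ∧ ∀ x, ak J k φ x ∈ Icc (0:ℝ) b := by
  induction k with
  | zero => exact ⟨hφc, hφ⟩
  | succ k ih =>
    have hm : AEStronglyMeasurable (ak J k φ) volume := ih.1.aestronglyMeasurable
    have heq : ak J (k+1) φ = fun x => ∫ y, J (x - y) * ak J k φ y := rfl
    constructor
    · rw [heq]
      have hb0 : 0 ≤ b := le_trans (hφ 0).1 (hφ 0).2
      refine cont_of_mod (w := fun h => b * omegaJ J h) ?_ ?_
      · have := (tendsto_omegaJ hJi).const_mul b
        simpa using this
      · intro x x'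
        exact a1_mod hJi hm ih.2 x x'
    · intro x
      exact a1_mem hJ0 hJi hJ1 hm ih.2 x

include hJ0 hJi hJ1 in
lemma ak_succ_mod {φ : ℝ → ℝ} (hφc : Continuous φ) (hφ : ∀ x, φ x ∈ Icc (0:ℝ) b) (k : ℕ)
    (x x' : ℝ) : |ak J (k+1) φ x - ak J (k+1) φ x'| ≤ b * omegaJ J (x' - x) :=
  a1_mod hJi (ak_props hJ0 hJi hJ1 hφc hφ k).1.aestronglyMeasurable
    (ak_props hJ0 hJi hJ1 hφc hφ k).2 x x'

end akprops

noncomputable def Rmap (J : ℝ → ℝ) (t : ℝ) (φ : ℝ → ℝ) (x : ℝ) : ℝ :=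
  Real.exp (-t) * ∑' k : ℕ, t ^ (k+1) / (Nat.factorial (k+1)) * ak J (k+1) φ x

lemma tsum_exp (t : ℝ) : ∑' k : ℕ, t ^ k / (Nat.factorial k : ℝ) = Real.exp t := by
  rw [Real.exp_eq_exp_ℝ, NormedSpace.exp_eq_tsum_div]

section coeffs
variable {t : ℝ} (ht : 0 ≤ t)

include ht in
lemma coeff_nonneg (k : ℕ) : 0 ≤ t ^ k / (Nat.factorial k : ℝ) :=
  div_nonneg (pow_nonneg ht k) (Nat.cast_nonneg _)

lemma summable_coeff_succ (t : ℝ) :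
    Summable (fun k : ℕ => t ^ (k+1) / (Nat.factorial (k+1) : ℝ)) := by
  have := (Real.summable_pow_div_factorial t).comp_injective Nat.succ_injective
  simpa [Function.comp_def] using this

include ht in
lemma tsum_coeff_succ_le : ∑' k : ℕ, t ^ (k+1) / (Nat.factorial (k+1) : ℝ) ≤ Real.exp t := by
  rw [← tsum_exp t]
  have := tsum_comp_le_tsum_of_inj (Real.summable_pow_div_factorial t)
    (coeff_nonneg ht) Nat.succ_injective
  simpa [Function.comp_def] using this

end coeffs

section Rprops
variable {J : ℝ → ℝ} (hJ0 : ∀ y, 0 ≤ J y) (hJi : Integrable J) (hJ1 : ∫ y, J y = 1)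
  {b : ℝ} {t : ℝ} (ht : 0 ≤ t) {φ : ℝ → ℝ} (hφc : Continuous φ) (hφ : ∀ x, φ x ∈ Icc (0:ℝ) b)

include hJ0 hJi hJ1 ht hφc hφ

lemma summable_ak (x : ℝ) :
    Summable (fun k : ℕ => t ^ k / (Nat.factorial k : ℝ) * ak J k φ x) := by
  have hb0 : (0:ℝ) ≤ b := le_trans (hφ 0).1 (hφ 0).2
  refine Summable.of_nonneg_of_le
    (fun k => mul_nonneg (coeff_nonneg ht k) ((ak_props hJ0 hJi hJ1 hφc hφ k).2 x).1)
    (fun k => mul_le_mul_of_nonneg_left ((ak_props hJ0 hJi hJ1 hφc hφ k).2 x).2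
      (coeff_nonneg ht k))
    ((Real.summable_pow_div_factorial t).mul_right b)

lemma summable_ak_succ (x : ℝ) :
    Summable (fun k : ℕ => t ^ (k+1) / (Nat.factorial (k+1) : ℝ) * ak J (k+1) φ x) := by
  have := (summable_ak hJ0 hJi hJ1 ht hφc hφ x).comp_injective Nat.succ_injective
  simpa [Function.comp_def] using this

lemma Tmap_decomp (x : ℝ) :
    Tmap J t φ x = Real.exp (-t) * φ x + Rmap J t φ x := by
  rw [Tmap, Rmap, Summable.tsum_eq_zero_add (summable_ak hJ0 hJi hJ1 ht hφc hφ x), mul_add]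
  norm_num [ak]

lemma Rmap_mem (x : ℝ) : Rmap J t φ x ∈ Icc (0:ℝ) b := by
  have hb0 : (0:ℝ) ≤ b := le_trans (hφ 0).1 (hφ 0).2
  have hbd := fun k => (ak_props hJ0 hJi hJ1 hφc hφ k).2
  constructor
  · exact mul_nonneg (Real.exp_pos _).le (tsum_nonneg fun k =>
      mul_nonneg (coeff_nonneg ht _) ((hbd (k+1)) x).1)
  · have h1 : ∑' k : ℕ, t ^ (k+1) / (Nat.factorial (k+1) : ℝ) * ak J (k+1) φ x
        ≤ ∑' k : ℕ, t ^ (k+1) / (Nat.factorial (k+1) : ℝ) * b := by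
      refine Summable.tsum_le_tsum (fun k => mul_le_mul_of_nonneg_left ((hbd (k+1)) x).2
        (coeff_nonneg ht _)) (summable_ak_succ hJ0 hJi hJ1 ht hφc hφ x)
        ((summable_coeff_succ t).mul_right b)
    have h2 : ∑' k : ℕ, t ^ (k+1) / (Nat.factorial (k+1) : ℝ) * b ≤ Real.exp t * b := by
      rw [tsum_mul_right]
      exact mul_le_mul_of_nonneg_right (tsum_coeff_succ_le ht) hb0
    have h3 : Real.exp (-t) * (Real.exp t * b) = b := by
      rw [← mul_assoc, ← Real.exp_add]
      simp
    calc Rmap J t φ x ≤ Real.exp (-t) * (Real.exp t * b) := by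
          rw [Rmap]
          exact mul_le_mul_of_nonneg_left (h1.trans h2) (Real.exp_pos _).le
      _ = b := h3

lemma Rmap_mod (x x' : ℝ) :
    |Rmap J t φ x - Rmap J t φ x'| ≤ b * omegaJ J (x' - x) := by
  have hb0 : (0:ℝ) ≤ b := le_trans (hφ 0).1 (hφ 0).2
  set w : ℝ := b * omegaJ J (x' - x) with hwdef
  have hw0 : 0 ≤ w := mul_nonneg hb0 (omegaJ_nonneg _ _)
  have hdiff : Rmap J t φ x - Rmap J t φ x' = Real.exp (-t) *
      ∑' k : ℕ, t ^ (k+1) / (Nat.factorial (k+1) : ℝ) * (ak J (k+1) φ x - ak J (k+1) φ x') := by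
    rw [Rmap, Rmap, ← mul_sub,
      ← Summable.tsum_sub (summable_ak_succ hJ0 hJi hJ1 ht hφc hφ x)
        (summable_ak_succ hJ0 hJi hJ1 ht hφc hφ x')]
    exact congrArg _ (tsum_congr fun k => (mul_sub _ _ _).symm)
  have hterm : ∀ k : ℕ,
      ‖t ^ (k+1) / (Nat.factorial (k+1) : ℝ) * (ak J (k+1) φ x - ak J (k+1) φ x')‖
        ≤ t ^ (k+1) / (Nat.factorial (k+1) : ℝ) * w := by
    intro k
    rw [Real.norm_eq_abs, abs_mul, abs_of_nonneg (coeff_nonneg ht (k+1))]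
    exact mul_le_mul_of_nonneg_left (ak_succ_mod hJ0 hJi hJ1 hφc hφ k x x')
      (coeff_nonneg ht (k+1))
  have hsn : Summable (fun k : ℕ =>
      ‖t ^ (k+1) / (Nat.factorial (k+1) : ℝ) * (ak J (k+1) φ x - ak J (k+1) φ x')‖) := by
    refine Summable.of_nonneg_of_le (fun k => norm_nonneg _) hterm
      ((summable_coeff_succ t).mul_right w)
  rw [hdiff, abs_mul, abs_of_nonneg (Real.exp_pos (-t)).le]
  calc Real.exp (-t) * |∑' k : ℕ, t ^ (k+1) / (Nat.factorial (k+1) : ℝ) *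
        (ak J (k+1) φ x - ak J (k+1) φ x')|
      ≤ Real.exp (-t) * (Real.exp t * w) := by
        refine mul_le_mul_of_nonneg_left ?_ (Real.exp_pos _).le
        calc |∑' k : ℕ, t ^ (k+1) / (Nat.factorial (k+1) : ℝ) *
              (ak J (k+1) φ x - ak J (k+1) φ x')|
            ≤ ∑' k : ℕ, ‖t ^ (k+1) / (Nat.factorial (k+1) : ℝ) *
              (ak J (k+1) φ x - ak J (k+1) φ x')‖ := by
              simpa [Real.norm_eq_abs] using norm_tsum_le_tsum_norm hsn
          _ ≤ ∑' k : ℕ, t ^ (k+1) / (Nat.factorial (k+1) : ℝ) * w := by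
              exact Summable.tsum_le_tsum hterm hsn ((summable_coeff_succ t).mul_right w)
          _ ≤ Real.exp t * w := by
              rw [tsum_mul_right]
              exact mul_le_mul_of_nonneg_right (tsum_coeff_succ_le ht) hw0
    _ = w := by rw [← mul_assoc, ← Real.exp_add]; simp

lemma Rmap_cont : Continuous (Rmap J t φ) := by
  refine cont_of_mod (w := fun h => b * omegaJ J h) ?_ (Rmap_mod hJ0 hJi hJ1 ht hφc hφ)
  have := (tendsto_omegaJ hJi).const_mul b
  simpa using this

end Rprops

/-- The set of continuous functions on `[a,b']` with values in `[0,b]` and modulus of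
continuity `w`. -/
def modSet (a b' b : ℝ) (w : ℝ → ℝ) : Set C(Set.Icc a b', ℝ) :=
  {f | (∀ x, f x ∈ Icc (0:ℝ) b) ∧
    ∀ x x' : Set.Icc a b', |f x - f x'| ≤ w ((x' : ℝ) - x)}

lemma isCompact_modSet {a b' b : ℝ} {w : ℝ → ℝ} (hw : Tendsto w (𝓝 0) (𝓝 0)) :
    IsCompact (modSet a b' b w) := by
  set T : Set ((Icc a b') → ℝ) :=
    {g | (∀ x, g x ∈ Icc (0:ℝ) b) ∧
      ∀ x x' : Icc a b', |g x - g x'| ≤ w ((x' : ℝ) - x)} with hT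
  have himg : ContinuousMap.toFun '' (modSet a b' b w) = T := by
    apply subset_antisymm
    · rintro g ⟨f, hf, rfl⟩
      exact hf
    · rintro g hg
      exact ⟨⟨g, cont_of_mod_subtype hw hg.2⟩, hg, rfl⟩
  have hTclosed : IsClosed T := by
    have : T = (⋂ x : Icc a b', {g : (Icc a b') → ℝ | g x ∈ Icc (0:ℝ) b}) ∩
        ⋂ x : Icc a b', ⋂ x' : Icc a b',
          {g : (Icc a b') → ℝ | |g x - g x'| ≤ w ((x' : ℝ) - x)} := by
      ext g
      simp only [hT, mem_setOf_eq, mem_inter_iff, mem_iInter, mem_setOf_eq]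
    rw [this]
    refine IsClosed.inter (isClosed_iInter fun x => ?_) (isClosed_iInter fun x =>
      isClosed_iInter fun x' => ?_)
    · exact IsClosed.preimage (continuous_apply x) isClosed_Icc
    · exact IsClosed.preimage (((continuous_apply x).sub (continuous_apply x')).abs)
        isClosed_Iic
  have hTsub : T ⊆ univ.pi (fun _ : Icc a b' => Icc (0:ℝ) b) := by
    intro g hg x _
    exact hg.1 x
  have hTcompact : IsCompact T :=
    IsCompact.of_isClosed_subset (isCompact_univ_pi fun _ => isCompact_Icc) hTclosed hTsub
  refine ArzelaAscoli.isCompact_of_equicontinuous _ (himg ▸ hTcompact) ?_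
  intro x₀
  rw [Metric.equicontinuousAt_iff]
  intro ε hε
  rcases Metric.tendsto_nhds_nhds.1 hw ε hε with ⟨δ, hδ, hball⟩
  refine ⟨δ, hδ, fun x hx f => ?_⟩
  have hd : dist ((x₀ : ℝ) - (x : ℝ)) 0 < δ := by
    rw [Real.dist_eq, sub_zero, abs_sub_comm]
    exact hx
  have := hball hd
  rw [Real.dist_eq, sub_zero] at this
  calc dist ((f : C(Icc a b', ℝ)) x₀) ((f : C(Icc a b', ℝ)) x)
      = |(f : C(Icc a b', ℝ)) x - (f : C(Icc a b', ℝ)) x₀| := by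
        rw [dist_comm]; exact Real.dist_eq _ _
    _ ≤ w ((x₀ : ℝ) - (x : ℝ)) := f.2.2 x x₀
    _ ≤ |w ((x₀ : ℝ) - (x : ℝ))| := le_abs_self _
    _ < ε := this

/-- Lemma 2: for any nonempty bounded interval `I = [a,b']`, any
`t ≥ 0` and any `U ⊆ C_b`, `α((T(t)U)_I) ≤ e^{−t} α(U_I)`, where `α` is the
Kuratowski measure of noncompactness in `C(I, ℝ)` with the sup norm. -/
theorem stmt_10 (J : ℝ → ℝ) (hJ0 : ∀ y, 0 ≤ J y) (hJi : Integrable J)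
    (hJ1 : ∫ y, J y = 1) (b : ℝ) (hb : 0 < b)
    (a b' : ℝ) (hab : a ≤ b') (t : ℝ) (ht : 0 ≤ t)
    (U : Set (ℝ → ℝ)) (hU : ∀ φ ∈ U, Continuous φ ∧ ∀ x, φ x ∈ Set.Icc 0 b) :
    kurat (restrictSet a b' ((fun φ => Tmap J t φ) '' U)) ≤
      ENNReal.ofReal (Real.exp (-t)) * kurat (restrictSet a b' U) := by
  have hw : Tendsto (fun h => b * omegaJ J h) (𝓝 0) (𝓝 0) := by
    have := (tendsto_omegaJ hJi).const_mul b
    simpa using this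
  have hS0 : kurat (modSet a b' b (fun h => b * omegaJ J h)) = 0 :=
    kurat_eq_zero_of_totallyBounded (isCompact_modSet hw).totallyBounded
  refine kurat_le_smul_add (Real.exp_pos (-t)) ?_ hS0
  rintro ψ ⟨φT, ⟨φ, hφU, rfl⟩, hψeq⟩
  obtain ⟨hφc, hφmem⟩ := hU φ hφU
  refine ⟨⟨fun x => φ x, hφc.comp continuous_subtype_val⟩, ⟨φ, hφU, fun x => rfl⟩,
    ⟨fun x => Rmap J t φ x,
      (Rmap_cont hJ0 hJi hJ1 ht hφc hφmem).comp continuous_subtype_val⟩,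
    ⟨fun x => Rmap_mem hJ0 hJi hJ1 ht hφc hφmem x,
      fun x x' => Rmap_mod hJ0 hJi hJ1 ht hφc hφmem x x'⟩, ?_⟩
  ext x
  rw [hψeq x]
  simp only [ContinuousMap.add_apply, ContinuousMap.smul_apply, ContinuousMap.coe_mk,
    smul_eq_mul]
  exact Tmap_decomp hJ0 hJi hJ1 ht hφc hφmem x
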